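/- For every probability measure μ on [0, ∞) (a randomized choice of buy-threshold t), the worst-case competitive ratio satisfies sup over n > 0 of (∫ c(t, n) dμ(t)) / min(n, 1) ≥ e/(e − 1). Hence no randomized threshold policy in the continuous model achieves competitive ratio better than e/(e−1). -/

import Mathlib

open MeasureTheory Set Real

lemma int_poly : IntegrableOn (fun n : ℝ => (n + 1) * Real.exp (-n)) (Set.Ioi 0) volume := by
  have h1 : IntegrableOn (fun n : ℝ => n * Real.exp (-n)) (Set.Ioi 0) volume := by
    have h := Real.GammaIntegral_convergent (s := 2) (by norm_num)
    refine h.congr_fun (fun x hx => ?_) measurableSet_Ioi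
    norm_num [Real.rpow_one, mul_comm]
  have h2 : IntegrableOn (fun n : ℝ => Real.exp (-n)) (Set.Ioi 0) volume := by
    have h := Real.GammaIntegral_convergent (s := 1) (by norm_num)
    refine h.congr_fun (fun x hx => ?_) measurableSet_Ioi
    norm_num
  have heq : (fun n : ℝ => (n + 1) * Real.exp (-n))
      = (fun n : ℝ => n * Real.exp (-n)) + fun n : ℝ => Real.exp (-n) := by
    funext n; simp [add_mul]
  rw [heq]; exact h1.add h2

lemma ftc (t : ℝ) : ∫ x in (0:ℝ)..t, x * Real.exp (-x) = 1 - (t + 1) * Real.exp (-t) := by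
  have key : ∀ x : ℝ, HasDerivAt (fun y => -((y + 1) * Real.exp (-y))) (x * Real.exp (-x)) x := by
    intro x
    have h1 : HasDerivAt (fun y : ℝ => Real.exp (-y)) (-Real.exp (-x)) x := by
      exact ((Real.hasDerivAt_exp (-x)).comp x ((hasDerivAt_id x).neg)).congr_deriv (by simp)
    have h3 := (((hasDerivAt_id x).add_const 1).mul h1).neg
    refine h3.congr_deriv ?_
    simp only [id_eq]; ring
  have hc : Continuous fun x : ℝ => x * Real.exp (-x) :=
    continuous_id.mul (Real.continuous_exp.comp continuous_neg)
  rw [intervalIntegral.integral_eq_sub_of_hasDerivAt (fun x _ => key x)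
    (hc.intervalIntegrable 0 t)]
  simp
  ring

lemma integrableOn_cost (t : ℝ) (ht : 0 ≤ t) :
    IntegrableOn (fun n : ℝ => (if n < t then n else t + 1) * Real.exp (-n))
      (Set.Ioi 0) volume := by
  refine Integrable.mono' int_poly ?_ ?_
  · refine (Measurable.aestronglyMeasurable ?_)
    exact ((measurable_id.ite (measurableSet_Iio) measurable_const).mul
      (Real.measurable_exp.comp measurable_id.neg))
  · filter_upwards [ae_restrict_mem measurableSet_Ioi] with n hn
    have hn0 : (0:ℝ) < n := hn
    rw [norm_mul, Real.norm_eq_abs, Real.norm_eq_abs, abs_of_nonneg (Real.exp_pos _).le]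
    refine mul_le_mul_of_nonneg_right ?_ (Real.exp_pos _).le
    by_cases h : n < t
    · simp only [if_pos h]
      rw [abs_of_pos hn0]; linarith
    · simp only [if_neg h]
      push_neg at h
      rw [abs_of_nonneg (by linarith)]; linarith

lemma inner_int (t : ℝ) (ht : 0 ≤ t) :
    ∫ n in Set.Ioi (0:ℝ), (if n < t then n else t + 1) * Real.exp (-n) = 1 := by
  have hI := integrableOn_cost t ht
  have hIoc : IntegrableOn (fun n : ℝ => (if n < t then n else t + 1) * Real.exp (-n))
      (Set.Ioc 0 t) volume := hI.mono_set Set.Ioc_subset_Ioi_self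
  have hIoi : IntegrableOn (fun n : ℝ => (if n < t then n else t + 1) * Real.exp (-n))
      (Set.Ioi t) volume := hI.mono_set (Set.Ioi_subset_Ioi ht)
  rw [← Set.Ioc_union_Ioi_eq_Ioi ht,
    setIntegral_union (Set.Ioc_disjoint_Ioi le_rfl) measurableSet_Ioi hIoc hIoi]
  have e1 : ∫ n in Set.Ioc (0:ℝ) t, (if n < t then n else t + 1) * Real.exp (-n)
      = 1 - (t + 1) * Real.exp (-t) := by
    rw [integral_Ioc_eq_integral_Ioo,
      setIntegral_congr_fun measurableSet_Ioo
        (g := fun n : ℝ => n * Real.exp (-n)) (fun n hn => by simp [hn.2]),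
      ← integral_Ioc_eq_integral_Ioo, ← intervalIntegral.integral_of_le ht, ftc]
  have e2 : ∫ n in Set.Ioi t, (if n < t then n else t + 1) * Real.exp (-n)
      = (t + 1) * Real.exp (-t) := by
    rw [setIntegral_congr_fun measurableSet_Ioi
        (g := fun n : ℝ => (t + 1) * Real.exp (-n))
        (fun n hn => by simp [not_lt.mpr (le_of_lt (Set.mem_Ioi.mp hn))]),
      integral_const_mul, integral_exp_neg_Ioi]
  rw [e1, e2]; ring

lemma min_int : ∫ n in Set.Ioi (0:ℝ), min n 1 * Real.exp (-n) = 1 - Real.exp (-1) := by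
  have hI : IntegrableOn (fun n : ℝ => min n 1 * Real.exp (-n)) (Set.Ioi 0) volume := by
    refine Integrable.mono' int_poly ?_ ?_
    · exact ((continuous_id.min continuous_const).mul
        (Real.continuous_exp.comp continuous_neg)).aestronglyMeasurable
    · filter_upwards [ae_restrict_mem measurableSet_Ioi] with n hn
      have hn0 : (0:ℝ) < n := hn
      rw [norm_mul, Real.norm_eq_abs, Real.norm_eq_abs, abs_of_nonneg (Real.exp_pos _).le]
      refine mul_le_mul_of_nonneg_right ?_ (Real.exp_pos _).le
      rw [abs_of_nonneg (le_min hn0.le zero_le_one)]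
      calc min n 1 ≤ n := min_le_left _ _
        _ ≤ n + 1 := by linarith
  have hIoc : IntegrableOn (fun n : ℝ => min n 1 * Real.exp (-n)) (Set.Ioc 0 1) volume :=
    hI.mono_set Set.Ioc_subset_Ioi_self
  have hIoi : IntegrableOn (fun n : ℝ => min n 1 * Real.exp (-n)) (Set.Ioi 1) volume :=
    hI.mono_set (Set.Ioi_subset_Ioi zero_le_one)
  rw [← Set.Ioc_union_Ioi_eq_Ioi (zero_le_one), 
    setIntegral_union (Set.Ioc_disjoint_Ioi le_rfl) measurableSet_Ioi hIoc hIoi]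
  have e1 : ∫ n in Set.Ioc (0:ℝ) 1, min n 1 * Real.exp (-n)
      = 1 - (1 + 1) * Real.exp (-1) := by
    rw [setIntegral_congr_fun measurableSet_Ioc
        (g := fun n : ℝ => n * Real.exp (-n)) (fun n hn => by simp [min_eq_left hn.2]),
      ← intervalIntegral.integral_of_le zero_le_one, ftc]
  have e2 : ∫ n in Set.Ioi (1:ℝ), min n 1 * Real.exp (-n) = Real.exp (-1) := by
    rw [setIntegral_congr_fun measurableSet_Ioi
        (g := fun n : ℝ => Real.exp (-n))
        (fun n hn => by simp [min_eq_right (le_of_lt (Set.mem_Ioi.mp hn))]),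
      integral_exp_neg_Ioi]
  rw [e1, e2]; ring
lemma integrableOn_min : IntegrableOn (fun n : ℝ => min n 1 * Real.exp (-n))
    (Set.Ioi 0) volume := by
  refine Integrable.mono' int_poly ?_ ?_
  · exact ((continuous_id.min continuous_const).mul
      (Real.continuous_exp.comp continuous_neg)).aestronglyMeasurable
  · filter_upwards [ae_restrict_mem measurableSet_Ioi] with n hn
    have hn0 : (0:ℝ) < n := hn
    rw [norm_mul, Real.norm_eq_abs, Real.norm_eq_abs, abs_of_nonneg (Real.exp_pos _).le]
    refine mul_le_mul_of_nonneg_right ?_ (Real.exp_pos _).le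
    rw [abs_of_nonneg (le_min hn0.le zero_le_one)]
    calc min n 1 ≤ n := min_le_left _ _
      _ ≤ n + 1 := by linarith

/-- Lower bound for randomized threshold policies in the continuous ski-rental model:
any ratio `r` that upper-bounds the expected cost of a randomized threshold `μ` against
`opt(n) = min(n, 1)` for all `n > 0` must satisfy `r ≥ e/(e-1)`. -/
theorem stmt13 (μ : Measure ℝ) (hprob : IsProbabilityMeasure μ)
    (hsupp : μ {t : ℝ | t < 0} = 0) (r : ℝ)
    (hr : ∀ n : ℝ, 0 < n →
      (∫ t, (if n < t then n else t + 1) ∂μ) ≤ r * min n 1) :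
    Real.exp 1 / (Real.exp 1 - 1) ≤ r := by
  set ν : Measure ℝ := volume.restrict (Set.Ioi 0) with hν
  have htae : ∀ᵐ t ∂μ, 0 ≤ t := by
    rw [ae_iff]
    simpa [not_le] using hsupp
  have hmeas : Measurable fun p : ℝ × ℝ =>
      (if p.2 < p.1 then p.2 else p.1 + 1) * Real.exp (-p.2) :=
    (Measurable.ite (measurableSet_lt measurable_snd measurable_fst) measurable_snd
      (measurable_fst.add_const 1)).mul (Real.measurable_exp.comp measurable_snd.neg)
  have hbound : Integrable (fun p : ℝ × ℝ => (1:ℝ) * ((p.2 + 1) * Real.exp (-p.2)))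
      (μ.prod ν) := Integrable.mul_prod (integrable_const 1) int_poly
  have haeprod : ∀ᵐ p : ℝ × ℝ ∂(μ.prod ν), 0 ≤ p.1 ∧ 0 < p.2 := by
    have h1 : ∀ᵐ p : ℝ × ℝ ∂(μ.prod ν), 0 ≤ p.1 := by
      rw [ae_iff]
      have hs : {p : ℝ × ℝ | ¬ 0 ≤ p.1} = {t : ℝ | t < 0} ×ˢ Set.univ := by
        ext p; simp [not_le]
      rw [hs, Measure.prod_prod, hsupp, zero_mul]
    have h2 : ∀ᵐ p : ℝ × ℝ ∂(μ.prod ν), 0 < p.2 := by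
      rw [ae_iff]
      have hs : {p : ℝ × ℝ | ¬ 0 < p.2} = Set.univ ×ˢ {n : ℝ | ¬ 0 < n} := by
        ext p; simp
      have hν0 : ν {n : ℝ | ¬ 0 < n} = 0 := by
        rw [hν, Measure.restrict_apply' measurableSet_Ioi]
        have he : {n : ℝ | ¬ 0 < n} ∩ Set.Ioi 0 = ∅ := by
          ext n; simp [Set.mem_Ioi]
        rw [he]; exact measure_empty
      rw [hs, Measure.prod_prod, hν0, mul_zero]
    exact h1.and h2
  have hF : Integrable (fun p : ℝ × ℝ =>
      (if p.2 < p.1 then p.2 else p.1 + 1) * Real.exp (-p.2)) (μ.prod ν) := by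
    refine hbound.mono' hmeas.aestronglyMeasurable ?_
    filter_upwards [haeprod] with p hp
    obtain ⟨ht, hn⟩ := hp
    rw [norm_mul, Real.norm_eq_abs, Real.norm_eq_abs,
      abs_of_nonneg (Real.exp_pos _).le, one_mul]
    refine mul_le_mul_of_nonneg_right ?_ (Real.exp_pos _).le
    by_cases h : p.2 < p.1
    · rw [if_pos h, abs_of_pos hn]; linarith
    · rw [if_neg h]; push_neg at h; rw [abs_of_nonneg (by linarith)]; linarith
  have hswap := integral_integral_swap
    (f := fun t n : ℝ => (if n < t then n else t + 1) * Real.exp (-n))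
    (μ := μ) (ν := ν) hF
  have hLHS : ∫ t, ∫ n, (if n < t then n else t + 1) * Real.exp (-n) ∂ν ∂μ = 1 := by
    have he : ∫ t, ∫ n, (if n < t then n else t + 1) * Real.exp (-n) ∂ν ∂μ
        = ∫ _t, (1:ℝ) ∂μ := by
      refine integral_congr_ae ?_
      filter_upwards [htae] with t ht
      exact inner_int t ht
    rw [he]
    simp [measure_univ]
  have hRHSle : ∫ n, ∫ t, (if n < t then n else t + 1) * Real.exp (-n) ∂μ ∂ν
      ≤ r * (1 - Real.exp (-1)) := by
    have hInt1 : Integrable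
        (fun n => ∫ t, (if n < t then n else t + 1) * Real.exp (-n) ∂μ) ν :=
      hF.integral_prod_right
    have hInt2 : Integrable (fun n : ℝ => r * (min n 1 * Real.exp (-n))) ν :=
      integrableOn_min.const_mul r
    calc ∫ n, ∫ t, (if n < t then n else t + 1) * Real.exp (-n) ∂μ ∂ν
        ≤ ∫ n, r * (min n 1 * Real.exp (-n)) ∂ν := by
          refine integral_mono_ae hInt1 hInt2 ?_
          filter_upwards [ae_restrict_mem measurableSet_Ioi] with n hn
          rw [integral_mul_const]
          have h1 := hr n hn
          calc (∫ t, (if n < t then n else t + 1) ∂μ) * Real.exp (-n)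
              ≤ (r * min n 1) * Real.exp (-n) :=
                mul_le_mul_of_nonneg_right h1 (Real.exp_pos _).le
            _ = r * (min n 1 * Real.exp (-n)) := by ring
      _ = r * (1 - Real.exp (-1)) := by
          rw [integral_const_mul]
          rw [hν, min_int]
  have h1le : (1:ℝ) ≤ r * (1 - Real.exp (-1)) :=
    le_trans (le_of_eq (hLHS.symm.trans hswap)) hRHSle
  have hE : (2:ℝ) ≤ Real.exp 1 := by
    have := Real.add_one_le_exp (1:ℝ); linarith
  rw [div_le_iff₀ (by linarith : (0:ℝ) < Real.exp 1 - 1)]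
  have hxe : Real.exp (-1) * Real.exp 1 = 1 := by
    rw [← Real.exp_add]; norm_num
  nlinarith [mul_le_mul_of_nonneg_right h1le (Real.exp_pos 1).le, Real.exp_pos (-1)]
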